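/- (Eichler's criterion) Let L' be an even lattice and L = U² ⊕ L'. Let v, w ∈ L be primitive elements such that (v,v) = (w,w) and [v/div(v)] = [w/div(w)] in the discriminant group A_L. Then there exists an isometry g ∈ S̃O^+(L), i.e. of determinant 1, preserving the orientation of the positive cone, and acting trivially on A_L, such that g(v) = w. -/

import Mathlib

set_option linter.unusedSectionVars false
set_option maxHeartbeats 1000000


open Matrix

/-- The ℝ-bilinear extension of the integral bilinear form with Gram matrix `M`. -/
def bilinR {ι : Type*} [Fintype ι] (M : Matrix ι ι ℤ) (x y : ι → ℝ) : ℝ :=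
  x ⬝ᵥ ((M.map (Int.cast : ℤ → ℝ)) *ᵥ y)

/-- `w` is a tuple of vectors of `L ⊗ ℝ` spanning a maximal positive definite subspace:
its Gram matrix is positive definite and no longer tuple has positive definite Gram matrix. -/
def IsMaxPosTuple {ι : Type*} [Fintype ι] (M : Matrix ι ι ℤ) {k : ℕ}
    (w : Fin k → ι → ℝ) : Prop :=
  (Matrix.of fun i j => bilinR M (w i) (w j)).PosDef ∧
    ∀ w' : Fin (k + 1) → ι → ℝ,
      ¬ (Matrix.of fun i j => bilinR M (w' i) (w' j)).PosDef

/-- `g` preserves the orientation of the positive cone of the lattice with Gram matrix `M`: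
for every basis `w` of a maximal positive definite subspace `W` of `L ⊗ ℝ`, the determinant of
the matrix `(B(wᵢ, g wⱼ))` (which equals, up to the positive factor `det (Gram w)`, the
determinant of the orthogonal projection of `g|_W` back to `W`) is positive. -/
def OrientPres {ι : Type*} [Fintype ι] (M : Matrix ι ι ℤ) (g : Matrix ι ι ℤ) : Prop :=
  ∀ (k : ℕ) (w : Fin k → ι → ℝ), IsMaxPosTuple M w →
    0 < (Matrix.of fun i j : Fin k =>
          bilinR M (w i) ((g.map (Int.cast : ℤ → ℝ)) *ᵥ w j)).det

/-- `g` is an isometry of the lattice with Gram matrix `M`. -/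
def IsIsometry {ι : Type*} [Fintype ι] (M : Matrix ι ι ℤ) (g : Matrix ι ι ℤ) : Prop :=
  gᵀ * M * g = M

/-- A vector of a lattice is primitive if it is divisible only by units. -/
def IsPrimitiveVec {ι : Type*} (l : ι → ℤ) : Prop :=
  ∀ (c : ℤ) (x : ι → ℤ), l = c • x → IsUnit c

/-- The ℚ-bilinear extension of the bilinear form with Gram matrix `M`. -/
def bilinQ {ι : Type*} [Fintype ι] (M : Matrix ι ι ℤ) (x y : ι → ℚ) : ℚ :=
  x ⬝ᵥ ((M.map (Int.cast : ℤ → ℚ)) *ᵥ y)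

/-- The canonical inclusion `ℤ^ι → ℚ^ι`. -/
def castVec {ι : Type*} (v : ι → ℤ) : ι → ℚ := fun i => (v i : ℚ)

/-- The Gram matrix of `U² = U ⊕ U` in the standard basis `e₁, f₁, e₂, f₂`. -/
def U2G : Matrix (Fin 4) (Fin 4) ℤ :=
  !![0,1,0,0;
     1,0,0,0;
     0,0,0,1;
     0,0,1,0]

namespace EichAux

variable {R : Type*} [CommRing R] {ι : Type*} [Fintype ι] [DecidableEq ι]

/-- bilinear form of Gram matrix `M` -/
def bf (M : Matrix ι ι R) (x y : ι → R) : R := x ⬝ᵥ (M *ᵥ y)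

section bf

variable {M : Matrix ι ι R}

@[simp] lemma bf_add_left (x y z : ι → R) : bf M (x + y) z = bf M x z + bf M y z := by
  simp [bf, add_dotProduct]

@[simp] lemma bf_add_right (x y z : ι → R) : bf M x (y + z) = bf M x y + bf M x z := by
  simp [bf, mulVec_add, dotProduct_add]

@[simp] lemma bf_sub_left (x y z : ι → R) : bf M (x - y) z = bf M x z - bf M y z := by
  simp [bf, sub_dotProduct]

@[simp] lemma bf_sub_right (x y z : ι → R) : bf M x (y - z) = bf M x y - bf M x z := by
  simp [bf, mulVec_sub, dotProduct_sub]

@[simp] lemma bf_smul_left (c : R) (x y : ι → R) : bf M (c • x) y = c * bf M x y := by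
  simp [bf, smul_dotProduct, smul_eq_mul]

@[simp] lemma bf_smul_right (c : R) (x y : ι → R) : bf M x (c • y) = c * bf M x y := by
  simp [bf, mulVec_smul, dotProduct_smul, smul_eq_mul]

@[simp] lemma bf_zero_left (y : ι → R) : bf M 0 y = 0 := by simp [bf]

@[simp] lemma bf_zero_right (y : ι → R) : bf M y 0 = 0 := by simp [bf]

@[simp] lemma bf_neg_left (x y : ι → R) : bf M (-x) y = - bf M x y := by
  simp [bf, neg_dotProduct]

@[simp] lemma bf_neg_right (x y : ι → R) : bf M x (-y) = - bf M x y := by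
  simp [bf, mulVec_neg, dotProduct_neg]

lemma bf_comm (hM : Mᵀ = M) (x y : ι → R) : bf M x y = bf M y x := by
  unfold bf dotProduct mulVec
  simp only [dotProduct, Finset.mul_sum]
  rw [Finset.sum_comm]
  refine Finset.sum_congr rfl fun i _ => Finset.sum_congr rfl fun j _ => ?_
  have hij : M i j = M j i := by nth_rewrite 1 [← hM]; exact Matrix.transpose_apply M i j
  rw [hij]
  ring

lemma mulVec_dotProduct_left (A : Matrix ι ι R) (x z : ι → R) :
    (A *ᵥ x) ⬝ᵥ z = x ⬝ᵥ (Aᵀ *ᵥ z) := by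
  rw [dotProduct_comm, dotProduct_mulVec, dotProduct_comm, mulVec_transpose]

lemma mulVec_dot (hM : Mᵀ = M) (e x : ι → R) : (M *ᵥ e) ⬝ᵥ x = bf M e x := by
  rw [dotProduct_comm]
  exact bf_comm hM x e

end bf

/-- Eichler transvection matrix. -/
def Tm (M : Matrix ι ι R) (e a : ι → R) (q : R) : Matrix ι ι R :=
  1 + vecMulVec a (M *ᵥ e) - vecMulVec e (M *ᵥ a) - q • vecMulVec e (M *ᵥ e)

lemma vecMulVec_mulVec (u v x : ι → R) : vecMulVec u v *ᵥ x = (v ⬝ᵥ x) • u := by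
  funext i
  simp [vecMulVec, mulVec, dotProduct, Finset.mul_sum, mul_comm, mul_left_comm]

lemma Tm_mulVec (hM : Mᵀ = M) (e a : ι → R) (q : R) (x : ι → R) :
    Tm M e a q *ᵥ x = x + bf M e x • a - (bf M a x + q * bf M e x) • e := by
  unfold Tm
  rw [sub_mulVec, sub_mulVec, add_mulVec, one_mulVec, smul_mulVec]
  rw [vecMulVec_mulVec, vecMulVec_mulVec, vecMulVec_mulVec]
  simp only [mulVec_dot hM]
  module

variable {M : Matrix ι ι R}

lemma matrix_ext_mulVec {A B : Matrix ι ι R} (h : ∀ x, A *ᵥ x = B *ᵥ x) : A = B := by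
  ext i j
  have := congrFun (h (Pi.single j 1)) i
  simpa [mulVec_single] using this

lemma entry_eq_bf (A : Matrix ι ι R) (i j : ι) :
    (Pi.single i 1 : ι → R) ⬝ᵥ (A *ᵥ Pi.single j 1) = A i j := by
  simp [mulVec_single, single_dotProduct]

lemma bf_mulVec_eq (A : Matrix ι ι R) (x y : ι → R) :
    bf M (A *ᵥ x) (A *ᵥ y) = x ⬝ᵥ ((Aᵀ * M * A) *ᵥ y) := by
  unfold bf
  rw [mulVec_dotProduct_left, mulVec_mulVec, mulVec_mulVec]

lemma isometry_of_bf {A : Matrix ι ι R} (h : ∀ x y, bf M (A *ᵥ x) (A *ᵥ y) = bf M x y) :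
    Aᵀ * M * A = M := by
  ext i j
  rw [← entry_eq_bf (Aᵀ * M * A) i j, ← entry_eq_bf M i j]
  rw [← bf_mulVec_eq A, h]
  rfl

section props

variable {e a : ι → R} {q : R} (hM : Mᵀ = M)
variable (hee : bf M e e = 0) (hea : bf M e a = 0) (haa : bf M a a = 2 * q)

include hM hee hea haa in
lemma Tm_isometry : (Tm M e a q)ᵀ * M * (Tm M e a q) = M := by
  apply isometry_of_bf
  intro x y
  rw [Tm_mulVec hM, Tm_mulVec hM]
  have hae : bf M a e = 0 := by rw [bf_comm hM]; exact hea
  simp only [bf_add_left, bf_add_right, bf_sub_left, bf_sub_right, bf_smul_left, bf_smul_right,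
    hee, hea, hae, haa]
  have h1 : bf M x a = bf M a x := bf_comm hM x a
  have h2 : bf M x e = bf M e x := bf_comm hM x e
  rw [h1, h2]
  ring

include hM hee hea haa in
lemma Tm_mul_neg : Tm M e a q * Tm M e (-a) q = 1 := by
  have hae : bf M a e = 0 := by rw [bf_comm hM]; exact hea
  apply matrix_ext_mulVec
  intro x
  rw [← mulVec_mulVec, one_mulVec, Tm_mulVec hM, Tm_mulVec hM]
  simp only [bf_add_right, bf_sub_right, bf_smul_right, bf_neg_right, bf_neg_left,
    hee, hea, hae, haa, bf_add_left, bf_sub_left, bf_smul_left, smul_neg]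
  module

end props

end EichAux


namespace EichAux

variable {R : Type*} [CommRing R] {S : Type*} [CommRing S]
variable {ι : Type*} [Fintype ι] [DecidableEq ι]

lemma map_mulVec' (f : R →+* S) (M : Matrix ι ι R) (x : ι → R) :
    (M.map f) *ᵥ (f ∘ x) = f ∘ (M *ᵥ x) := by
  funext i
  simp [mulVec, dotProduct, map_apply, map_sum, Function.comp]

lemma map_bf (f : R →+* S) (M : Matrix ι ι R) (x y : ι → R) :
    bf (M.map f) (f ∘ x) (f ∘ y) = f (bf M x y) := by
  unfold bf
  rw [map_mulVec' f M y]
  simp [dotProduct, map_sum, Function.comp]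

lemma map_vecMulVec (f : R →+* S) (u v : ι → R) :
    (vecMulVec u v).map f = vecMulVec (f ∘ u) (f ∘ v) := by
  ext i j
  simp [vecMulVec_apply, map_apply]

lemma map_Tm (f : R →+* S) (M : Matrix ι ι R) (e a : ι → R) (q : R) :
    (Tm M e a q).map f = Tm (M.map f) (f ∘ e) (f ∘ a) (f q) := by
  unfold Tm
  have hs : (q • vecMulVec e (M *ᵥ e)).map f = f q • (vecMulVec e (M *ᵥ e)).map f := by
    ext i j
    simp [map_apply]
  rw [Matrix.map_sub _ (fun a b => f.map_sub a b), Matrix.map_sub _ (fun a b => f.map_sub a b),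
    Matrix.map_add _ (fun a b => f.map_add a b), Matrix.map_one f f.map_zero f.map_one, hs]
  rw [map_vecMulVec, map_vecMulVec, map_vecMulVec, ← map_mulVec' f M e, ← map_mulVec' f M a]

end EichAux

namespace EichAux

/-- Index type -/
abbrev Idx (n : ℕ) := Fin 4 ⊕ Fin n

variable {n : ℕ}

def MM (M' : Matrix (Fin n) (Fin n) ℤ) : Matrix (Idx n) (Idx n) ℤ :=
  fromBlocks U2G 0 0 M'

def vec (a₁ b₁ a₂ b₂ : ℤ) (z : Fin n → ℤ) : Idx n → ℤ := Sum.elim ![a₁, b₁, a₂, b₂] z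

variable {M' : Matrix (Fin n) (Fin n) ℤ}

lemma U2G_symm : U2Gᵀ = U2G := by decide

lemma MM_symm (hsymm : M'ᵀ = M') : (MM M')ᵀ = MM M' := by
  unfold MM
  rw [fromBlocks_transpose, U2G_symm, hsymm]
  simp

lemma vec_eta (x : Idx n → ℤ) :
    vec (x (Sum.inl 0)) (x (Sum.inl 1)) (x (Sum.inl 2)) (x (Sum.inl 3)) (fun i => x (Sum.inr i))
      = x := by
  funext i
  rcases i with i | i
  · fin_cases i <;> rfl
  · rfl

lemma bform (a₁ b₁ a₂ b₂ : ℤ) (z : Fin n → ℤ) (a₁' b₁' a₂' b₂' : ℤ) (z' : Fin n → ℤ) :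
    bf (MM M') (vec a₁ b₁ a₂ b₂ z) (vec a₁' b₁' a₂' b₂' z') =
      a₁ * b₁' + b₁ * a₁' + a₂ * b₂' + b₂ * a₂' + z ⬝ᵥ (M' *ᵥ z') := by
  unfold bf MM vec
  rw [fromBlocks_mulVec]
  have hU : U2G *ᵥ ![a₁', b₁', a₂', b₂'] = ![b₁', a₁', b₂', a₂'] := by
    funext i
    fin_cases i <;> simp [U2G, mulVec, dotProduct, Fin.sum_univ_four]
  simp only [Sum.elim_comp_inl, Sum.elim_comp_inr, Matrix.zero_mulVec, add_zero, zero_add]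
  rw [hU, sumElim_dotProduct_sumElim]
  simp only [dotProduct, Fin.sum_univ_four, Matrix.cons_val_zero, Matrix.cons_val_one,
    Matrix.head_cons, Matrix.cons_val_two, Matrix.tail_cons, Matrix.cons_val_three]
  try ring

/-- basis vectors -/
def e1 : Idx n → ℤ := vec 1 0 0 0 0
def f1 : Idx n → ℤ := vec 0 1 0 0 0
def e2 : Idx n → ℤ := vec 0 0 1 0 0
def f2 : Idx n → ℤ := vec 0 0 0 1 0

lemma vec_add (a₁ b₁ a₂ b₂ : ℤ) (z : Fin n → ℤ) (c₁ c₂ c₃ c₄ : ℤ) (y : Fin n → ℤ) :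
    vec a₁ b₁ a₂ b₂ z + vec c₁ c₂ c₃ c₄ y = vec (a₁+c₁) (b₁+c₂) (a₂+c₃) (b₂+c₄) (z+y) := by
  funext i
  rcases i with i | i
  · fin_cases i <;> rfl
  · rfl

lemma vec_smul (c : ℤ) (a₁ b₁ a₂ b₂ : ℤ) (z : Fin n → ℤ) :
    c • vec a₁ b₁ a₂ b₂ z = vec (c*a₁) (c*b₁) (c*a₂) (c*b₂) (c • z) := by
  funext i
  rcases i with i | i
  · fin_cases i <;> rfl
  · rfl

lemma vec_sub (a₁ b₁ a₂ b₂ : ℤ) (z : Fin n → ℤ) (c₁ c₂ c₃ c₄ : ℤ) (y : Fin n → ℤ) :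
    vec a₁ b₁ a₂ b₂ z - vec c₁ c₂ c₃ c₄ y = vec (a₁-c₁) (b₁-c₂) (a₂-c₃) (b₂-c₄) (z-y) := by
  funext i
  rcases i with i | i
  · fin_cases i <;> rfl
  · rfl

/-- Transvection data for the lattice `U² ⊕ L'`. -/
structure TD (M' : Matrix (Fin n) (Fin n) ℤ) where
  e : Idx n → ℤ
  a : Idx n → ℤ
  q : ℤ
  he : bf (MM M') e e = 0
  hea : bf (MM M') e a = 0
  haa : bf (MM M') a a = 2 * q

def TD.mat (d : TD M') : Matrix (Idx n) (Idx n) ℤ := Tm (MM M') d.e d.a d.q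

def prodMat (l : List (TD M')) : Matrix (Idx n) (Idx n) ℤ := (l.map TD.mat).prod

def Reach (M' : Matrix (Fin n) (Fin n) ℤ) (v w : Idx n → ℤ) : Prop :=
  ∃ l : List (TD M'), prodMat l *ᵥ v = w

lemma Reach.refl (v : Idx n → ℤ) : Reach M' v v := ⟨[], by simp [prodMat, one_mulVec]⟩

lemma prodMat_append (l₁ l₂ : List (TD M')) :
    prodMat (l₁ ++ l₂) = prodMat l₁ * prodMat l₂ := by
  simp [prodMat]

lemma Reach.trans {v w u : Idx n → ℤ} (h1 : Reach M' v w) (h2 : Reach M' w u) :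
    Reach M' v u := by
  obtain ⟨l₁, h1⟩ := h1
  obtain ⟨l₂, h2⟩ := h2
  exact ⟨l₂ ++ l₁, by rw [prodMat_append, ← mulVec_mulVec, h1, h2]⟩

end EichAux
namespace EichAux

variable {n : ℕ} {M' : Matrix (Fin n) (Fin n) ℤ}

lemma vec_congr {a₁ b₁ a₂ b₂ c₁ c₂ c₃ c₄ : ℤ} {z y : Fin n → ℤ}
    (h1 : a₁ = c₁) (h2 : b₁ = c₂) (h3 : a₂ = c₃) (h4 : b₂ = c₄) (h5 : z = y) :
    vec a₁ b₁ a₂ b₂ z = vec c₁ c₂ c₃ c₄ y := by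
  subst h1; subst h2; subst h3; subst h4; subst h5; rfl

lemma Reach.single (d : TD M') (v : Idx n → ℤ) : Reach M' v (d.mat *ᵥ v) :=
  ⟨[d], by simp [prodMat]⟩

section moves

variable (hsymm : M'ᵀ = M')
variable (a₁ b₁ a₂ b₂ : ℤ) (z : Fin n → ℤ)

include hsymm

lemma mat_gen_e1 (c₁ c₃ c₄ q : ℤ) (cz : Fin n → ℤ)
    (hq : bf (MM M') (vec c₁ 0 c₃ c₄ cz) (vec c₁ 0 c₃ c₄ cz) = 2*q) :
    Tm (MM M') (vec 1 0 0 0 0) (vec c₁ 0 c₃ c₄ cz) q *ᵥ vec a₁ b₁ a₂ b₂ z =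
      vec (a₁ + b₁*c₁ - (c₁*b₁ + c₃*b₂ + c₄*a₂ + cz ⬝ᵥ (M' *ᵥ z)) - q*b₁) b₁ (a₂ + b₁*c₃)
        (b₂ + b₁*c₄) (z + b₁ • cz) := by
  rw [Tm_mulVec (MM_symm hsymm), bform, bform]
  simp only [vec_smul, vec_add, vec_sub]
  refine vec_congr ?_ ?_ ?_ ?_ ?_ <;>
    first | (funext i; simp; try ring) | (simp; try ring)

lemma mat_gen_f1 (c₂ c₃ c₄ q : ℤ) (cz : Fin n → ℤ)
    (hq : bf (MM M') (vec 0 c₂ c₃ c₄ cz) (vec 0 c₂ c₃ c₄ cz) = 2*q) :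
    Tm (MM M') (vec 0 1 0 0 0) (vec 0 c₂ c₃ c₄ cz) q *ᵥ vec a₁ b₁ a₂ b₂ z =
      vec a₁ (b₁ + a₁*c₂ - (c₂*a₁ + c₃*b₂ + c₄*a₂ + cz ⬝ᵥ (M' *ᵥ z)) - q*a₁) (a₂ + a₁*c₃)
        (b₂ + a₁*c₄) (z + a₁ • cz) := by
  rw [Tm_mulVec (MM_symm hsymm), bform, bform]
  simp only [vec_smul, vec_add, vec_sub]
  refine vec_congr ?_ ?_ ?_ ?_ ?_ <;>
    first | (funext i; simp; try ring) | (simp; try ring)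

lemma mat_gen_e2 (c₁ c₂ c₃ q : ℤ) (cz : Fin n → ℤ)
    (hq : bf (MM M') (vec c₁ c₂ c₃ 0 cz) (vec c₁ c₂ c₃ 0 cz) = 2*q) :
    Tm (MM M') (vec 0 0 1 0 0) (vec c₁ c₂ c₃ 0 cz) q *ᵥ vec a₁ b₁ a₂ b₂ z =
      vec (a₁ + b₂*c₁) (b₁ + b₂*c₂)
        (a₂ + b₂*c₃ - (c₁*b₁ + c₂*a₁ + c₃*b₂ + cz ⬝ᵥ (M' *ᵥ z)) - q*b₂)
        b₂ (z + b₂ • cz) := by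
  rw [Tm_mulVec (MM_symm hsymm), bform, bform]
  simp only [vec_smul, vec_add, vec_sub]
  refine vec_congr ?_ ?_ ?_ ?_ ?_ <;>
    first | (funext i; simp; try ring) | (simp; try ring)

lemma mat_gen_f2 (c₁ c₂ c₄ q : ℤ) (cz : Fin n → ℤ)
    (hq : bf (MM M') (vec c₁ c₂ 0 c₄ cz) (vec c₁ c₂ 0 c₄ cz) = 2*q) :
    Tm (MM M') (vec 0 0 0 1 0) (vec c₁ c₂ 0 c₄ cz) q *ᵥ vec a₁ b₁ a₂ b₂ z =
      vec (a₁ + a₂*c₁) (b₁ + a₂*c₂) a₂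
        (b₂ + a₂*c₄ - (c₁*b₁ + c₂*a₁ + c₄*a₂ + cz ⬝ᵥ (M' *ᵥ z)) - q*a₂)
        (z + a₂ • cz) := by
  rw [Tm_mulVec (MM_symm hsymm), bform, bform]
  simp only [vec_smul, vec_add, vec_sub]
  refine vec_congr ?_ ?_ ?_ ?_ ?_ <;>
    first | (funext i; simp; try ring) | (simp; try ring)

variable (k : ℤ)

lemma reach_M1 : Reach M' (vec a₁ b₁ a₂ b₂ z) (vec (a₁ + k*b₂) b₁ (a₂ - k*b₁) b₂ z) := by
  have hd : bf (MM M') (vec (0:ℤ) 0 1 0 (0 : Fin n → ℤ)) (vec 0 0 1 0 0) = 0 := by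
    rw [bform]; simp
  have hq : bf (MM M') (vec k 0 0 0 (0 : Fin n → ℤ)) (vec k 0 0 0 0) = 2*0 := by
    rw [bform]; simp
  have hea : bf (MM M') (vec (0:ℤ) 0 1 0 (0 : Fin n → ℤ)) (vec k 0 0 0 0) = 0 := by
    rw [bform]; simp
  have h := Reach.single (M' := M') ⟨_, _, _, hd, hea, hq⟩ (vec a₁ b₁ a₂ b₂ z)
  rw [TD.mat] at h
  rw [mat_gen_e2 hsymm a₁ b₁ a₂ b₂ z k 0 0 0 0 hq] at h
  convert h using 1
  refine vec_congr ?_ ?_ ?_ ?_ ?_ <;> first | (funext i; simp) | (simp; try ring)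

lemma reach_M2 : Reach M' (vec a₁ b₁ a₂ b₂ z) (vec a₁ (b₁ + k*b₂) (a₂ - k*a₁) b₂ z) := by
  have hd : bf (MM M') (vec (0:ℤ) 0 1 0 (0 : Fin n → ℤ)) (vec 0 0 1 0 0) = 0 := by
    rw [bform]; simp
  have hq : bf (MM M') (vec (0:ℤ) k 0 0 (0 : Fin n → ℤ)) (vec 0 k 0 0 0) = 2*0 := by
    rw [bform]; simp
  have hea : bf (MM M') (vec (0:ℤ) 0 1 0 (0 : Fin n → ℤ)) (vec 0 k 0 0 0) = 0 := by
    rw [bform]; simp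
  have h := Reach.single (M' := M') ⟨_, _, _, hd, hea, hq⟩ (vec a₁ b₁ a₂ b₂ z)
  rw [TD.mat] at h
  rw [mat_gen_e2 hsymm a₁ b₁ a₂ b₂ z 0 k 0 0 0 hq] at h
  convert h using 1
  refine vec_congr ?_ ?_ ?_ ?_ ?_ <;> first | (funext i; simp) | (simp; try ring)

lemma reach_M3 : Reach M' (vec a₁ b₁ a₂ b₂ z) (vec (a₁ + k*a₂) b₁ a₂ (b₂ - k*b₁) z) := by
  have hd : bf (MM M') (vec (0:ℤ) 0 0 1 (0 : Fin n → ℤ)) (vec 0 0 0 1 0) = 0 := by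
    rw [bform]; simp
  have hq : bf (MM M') (vec k 0 0 0 (0 : Fin n → ℤ)) (vec k 0 0 0 0) = 2*0 := by
    rw [bform]; simp
  have hea : bf (MM M') (vec (0:ℤ) 0 0 1 (0 : Fin n → ℤ)) (vec k 0 0 0 0) = 0 := by
    rw [bform]; simp
  have h := Reach.single (M' := M') ⟨_, _, _, hd, hea, hq⟩ (vec a₁ b₁ a₂ b₂ z)
  rw [TD.mat] at h
  rw [mat_gen_f2 hsymm a₁ b₁ a₂ b₂ z k 0 0 0 0 hq] at h
  convert h using 1
  refine vec_congr ?_ ?_ ?_ ?_ ?_ <;> first | (funext i; simp) | (simp; try ring)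

lemma reach_M6 : Reach M' (vec a₁ b₁ a₂ b₂ z) (vec (a₁ - k*a₂) b₁ a₂ (b₂ + k*b₁) z) := by
  have hd : bf (MM M') (vec (1:ℤ) 0 0 0 (0 : Fin n → ℤ)) (vec 1 0 0 0 0) = 0 := by
    rw [bform]; simp
  have hq : bf (MM M') (vec (0:ℤ) 0 0 k (0 : Fin n → ℤ)) (vec 0 0 0 k 0) = 2*0 := by
    rw [bform]; simp
  have hea : bf (MM M') (vec (1:ℤ) 0 0 0 (0 : Fin n → ℤ)) (vec 0 0 0 k 0) = 0 := by
    rw [bform]; simp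
  have h := Reach.single (M' := M') ⟨_, _, _, hd, hea, hq⟩ (vec a₁ b₁ a₂ b₂ z)
  rw [TD.mat] at h
  rw [mat_gen_e1 hsymm a₁ b₁ a₂ b₂ z 0 0 k 0 0 hq] at h
  convert h using 1
  refine vec_congr ?_ ?_ ?_ ?_ ?_ <;> first | (funext i; simp) | (simp; try ring)

lemma reach_M8 : Reach M' (vec a₁ b₁ a₂ b₂ z) (vec a₁ (b₁ - k*a₂) a₂ (b₂ + k*a₁) z) := by
  have hd : bf (MM M') (vec (0:ℤ) 1 0 0 (0 : Fin n → ℤ)) (vec 0 1 0 0 0) = 0 := by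
    rw [bform]; simp
  have hq : bf (MM M') (vec (0:ℤ) 0 0 k (0 : Fin n → ℤ)) (vec 0 0 0 k 0) = 2*0 := by
    rw [bform]; simp
  have hea : bf (MM M') (vec (0:ℤ) 1 0 0 (0 : Fin n → ℤ)) (vec 0 0 0 k 0) = 0 := by
    rw [bform]; simp
  have h := Reach.single (M' := M') ⟨_, _, _, hd, hea, hq⟩ (vec a₁ b₁ a₂ b₂ z)
  rw [TD.mat] at h
  rw [mat_gen_f1 hsymm a₁ b₁ a₂ b₂ z 0 0 k 0 0 hq] at h
  convert h using 1
  refine vec_congr ?_ ?_ ?_ ?_ ?_ <;> first | (funext i; simp) | (simp; try ring)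

end moves

end EichAux
namespace EichAux

variable {n : ℕ} {M' : Matrix (Fin n) (Fin n) ℤ}

/-- negate the `a` of a transvection datum -/
def TD.neg (d : TD M') : TD M' :=
  ⟨d.e, -d.a, d.q, d.he, by rw [bf_neg_right, d.hea, neg_zero], by
    rw [bf_neg_right, bf_neg_left, d.haa, neg_neg]⟩

def invList (l : List (TD M')) : List (TD M') := (l.map TD.neg).reverse

section transport

variable (hsymm : M'ᵀ = M')
include hsymm

lemma TD.neg_mat_mul (d : TD M') : (TD.neg d).mat * d.mat = 1 := by
  have := Tm_mul_neg (M := MM M') (e := d.e) (a := -d.a) (q := d.q) (MM_symm hsymm)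
    d.he (by rw [bf_neg_right, d.hea, neg_zero])
    (by rw [bf_neg_right, bf_neg_left, d.haa, neg_neg])
  rw [neg_neg] at this
  exact this

lemma TD.mat_mul_neg (d : TD M') : d.mat * (TD.neg d).mat = 1 := by
  have := Tm_mul_neg (M := MM M') (e := d.e) (a := d.a) (q := d.q) (MM_symm hsymm)
    d.he d.hea d.haa
  exact this

lemma prodMat_inv_left (l : List (TD M')) : prodMat (invList l) * prodMat l = 1 := by
  induction l with
  | nil => simp [prodMat, invList]
  | cons d l ih =>
    have h1 : invList (d :: l) = invList l ++ [TD.neg d] := by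
      simp [invList]
    rw [h1, prodMat_append]
    have h2 : prodMat (d :: l) = d.mat * prodMat l := by simp [prodMat]
    rw [h2]
    have : prodMat [TD.neg d] * (d.mat * prodMat l) = prodMat l := by
      rw [← Matrix.mul_assoc]
      have : prodMat [TD.neg d] * d.mat = 1 := by
        simpa [prodMat] using TD.neg_mat_mul hsymm d
      rw [this, Matrix.one_mul]
    rw [Matrix.mul_assoc, this, ih]

lemma prodMat_inv_right (l : List (TD M')) : prodMat l * prodMat (invList l) = 1 := by
  induction l with
  | nil => simp [prodMat, invList]
  | cons d l ih =>
    have h1 : invList (d :: l) = invList l ++ [TD.neg d] := by simp [invList]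
    have h2 : prodMat (d :: l) = d.mat * prodMat l := by simp [prodMat]
    rw [h1, h2, prodMat_append, Matrix.mul_assoc, ← Matrix.mul_assoc (prodMat l), ih,
      Matrix.one_mul]
    have : prodMat [TD.neg d] = (TD.neg d).mat := by simp [prodMat]
    rw [this, TD.mat_mul_neg hsymm d]

lemma prodMat_isometry (l : List (TD M')) :
    (prodMat l)ᵀ * MM M' * prodMat l = MM M' := by
  induction l with
  | nil => simp [prodMat]
  | cons d l ih =>
    have h2 : prodMat (d :: l) = d.mat * prodMat l := by simp [prodMat]
    rw [h2, Matrix.transpose_mul]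
    have hd : (d.mat)ᵀ * MM M' * d.mat = MM M' :=
      Tm_isometry (MM_symm hsymm) d.he d.hea d.haa
    calc (prodMat l)ᵀ * d.matᵀ * MM M' * (d.mat * prodMat l)
        = (prodMat l)ᵀ * (d.matᵀ * MM M' * d.mat) * prodMat l := by
          simp only [Matrix.mul_assoc]
      _ = MM M' := by rw [hd, ih]
  -- note: `prodMat [] = 1`

lemma prodMat_bf (l : List (TD M')) (x y : Idx n → ℤ) :
    bf (MM M') (prodMat l *ᵥ x) (prodMat l *ᵥ y) = bf (MM M') x y := by
  rw [bf_mulVec_eq, prodMat_isometry hsymm]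
  rfl

lemma Reach.norm_pres {v w : Idx n → ℤ} (h : Reach M' v w) :
    bf (MM M') w w = bf (MM M') v v := by
  obtain ⟨l, hl⟩ := h
  rw [← hl, prodMat_bf hsymm]

lemma Reach.dvd_pres {v w : Idx n → ℤ} {d : ℤ} (h : Reach M' v w)
    (hdvd : ∀ x, d ∣ bf (MM M') v x) : ∀ x, d ∣ bf (MM M') w x := by
  obtain ⟨l, hl⟩ := h
  intro x
  have hx : x = prodMat l *ᵥ (prodMat (invList l) *ᵥ x) := by
    rw [mulVec_mulVec, prodMat_inv_right hsymm, one_mulVec]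
  rw [← hl, hx, prodMat_bf hsymm]
  exact hdvd _

lemma Reach.mem_pres {v w : Idx n → ℤ} {d : ℤ} (h : Reach M' v w)
    (hmem : ∃ x, bf (MM M') v x = d) : ∃ x, bf (MM M') w x = d := by
  obtain ⟨l, hl⟩ := h
  obtain ⟨x, hx⟩ := hmem
  exact ⟨prodMat l *ᵥ x, by rw [← hl, prodMat_bf hsymm]; exact hx⟩

lemma Reach.mod_pres {v w : Idx n → ℤ} {d : ℤ} (h : Reach M' v w)
    (hdvd : ∀ x, d ∣ bf (MM M') v x) : ∃ u, w = v + d • u := by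
  obtain ⟨l, hl⟩ := h
  subst hl
  induction l with
  | nil => exact ⟨0, by simp [prodMat]⟩
  | cons dd l ih =>
    obtain ⟨u₁, hu₁⟩ := ih
    have h2 : prodMat (dd :: l) = dd.mat * prodMat l := by simp [prodMat]
    set w₁ := prodMat l *ᵥ v with hw₁
    have hdvd₁ : ∀ x, d ∣ bf (MM M') w₁ x := Reach.dvd_pres hsymm ⟨l, rfl⟩ hdvd
    obtain ⟨k₁, hk₁⟩ := (by
      have := hdvd₁ dd.e
      rwa [← bf_comm (MM_symm hsymm)] at this : d ∣ bf (MM M') dd.e w₁)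
    obtain ⟨k₂, hk₂⟩ := (by
      have := hdvd₁ dd.a
      rwa [← bf_comm (MM_symm hsymm)] at this : d ∣ bf (MM M') dd.a w₁)
    rw [h2, ← mulVec_mulVec, ← hw₁, TD.mat, Tm_mulVec (MM_symm hsymm), hk₁, hk₂, hu₁]
    refine ⟨u₁ + k₁ • dd.a - (k₂ + dd.q * k₁) • dd.e, ?_⟩
    module

end transport

end EichAux
namespace EichAux

variable {n : ℕ} {M' : Matrix (Fin n) (Fin n) ℤ}

section moves2

variable (hsymm : M'ᵀ = M')
include hsymm

lemma reach_gen_e1 (a₁ b₁ a₂ b₂ : ℤ) (z : Fin n → ℤ) (c₁ c₃ c₄ q : ℤ) (cz : Fin n → ℤ)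
    (hq : bf (MM M') (vec c₁ 0 c₃ c₄ cz) (vec c₁ 0 c₃ c₄ cz) = 2*q) :
    Reach M' (vec a₁ b₁ a₂ b₂ z)
      (vec (a₁ + b₁*c₁ - (c₁*b₁ + c₃*b₂ + c₄*a₂ + cz ⬝ᵥ (M' *ᵥ z)) - q*b₁) b₁ (a₂ + b₁*c₃)
        (b₂ + b₁*c₄) (z + b₁ • cz)) := by
  have hd : bf (MM M') (vec (1:ℤ) 0 0 0 (0 : Fin n → ℤ)) (vec 1 0 0 0 0) = 0 := by
    rw [bform]; simp
  have hea : bf (MM M') (vec (1:ℤ) 0 0 0 (0 : Fin n → ℤ)) (vec c₁ 0 c₃ c₄ cz) = 0 := by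
    rw [bform]; simp
  have h := Reach.single (M' := M') ⟨_, _, _, hd, hea, hq⟩ (vec a₁ b₁ a₂ b₂ z)
  rw [TD.mat] at h
  rwa [mat_gen_e1 hsymm a₁ b₁ a₂ b₂ z c₁ c₃ c₄ q cz hq] at h

lemma reach_gen_e2 (a₁ b₁ a₂ b₂ : ℤ) (z : Fin n → ℤ) (c₁ c₂ c₃ q : ℤ) (cz : Fin n → ℤ)
    (hq : bf (MM M') (vec c₁ c₂ c₃ 0 cz) (vec c₁ c₂ c₃ 0 cz) = 2*q) :
    Reach M' (vec a₁ b₁ a₂ b₂ z)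
      (vec (a₁ + b₂*c₁) (b₁ + b₂*c₂)
        (a₂ + b₂*c₃ - (c₁*b₁ + c₂*a₁ + c₃*b₂ + cz ⬝ᵥ (M' *ᵥ z)) - q*b₂)
        b₂ (z + b₂ • cz)) := by
  have hd : bf (MM M') (vec (0:ℤ) 0 1 0 (0 : Fin n → ℤ)) (vec 0 0 1 0 0) = 0 := by
    rw [bform]; simp
  have hea : bf (MM M') (vec (0:ℤ) 0 1 0 (0 : Fin n → ℤ)) (vec c₁ c₂ c₃ 0 cz) = 0 := by
    rw [bform]; simp
  have h := Reach.single (M' := M') ⟨_, _, _, hd, hea, hq⟩ (vec a₁ b₁ a₂ b₂ z)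
  rw [TD.mat] at h
  rwa [mat_gen_e2 hsymm a₁ b₁ a₂ b₂ z c₁ c₂ c₃ q cz hq] at h

lemma reach_gen_f2 (a₁ b₁ a₂ b₂ : ℤ) (z : Fin n → ℤ) (c₁ c₂ c₄ q : ℤ) (cz : Fin n → ℤ)
    (hq : bf (MM M') (vec c₁ c₂ 0 c₄ cz) (vec c₁ c₂ 0 c₄ cz) = 2*q) :
    Reach M' (vec a₁ b₁ a₂ b₂ z)
      (vec (a₁ + a₂*c₁) (b₁ + a₂*c₂) a₂
        (b₂ + a₂*c₄ - (c₁*b₁ + c₂*a₁ + c₄*a₂ + cz ⬝ᵥ (M' *ᵥ z)) - q*a₂)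
        (z + a₂ • cz)) := by
  have hd : bf (MM M') (vec (0:ℤ) 0 0 1 (0 : Fin n → ℤ)) (vec 0 0 0 1 0) = 0 := by
    rw [bform]; simp
  have hea : bf (MM M') (vec (0:ℤ) 0 0 1 (0 : Fin n → ℤ)) (vec c₁ c₂ 0 c₄ cz) = 0 := by
    rw [bform]; simp
  have h := Reach.single (M' := M') ⟨_, _, _, hd, hea, hq⟩ (vec a₁ b₁ a₂ b₂ z)
  rw [TD.mat] at h
  rwa [mat_gen_f2 hsymm a₁ b₁ a₂ b₂ z c₁ c₂ c₄ q cz hq] at h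

/-- Euclid: assuming `a₁ ≠ 0`, clear `a₂` and `b₂`. -/
lemma SM' : ∀ N : ℕ, ∀ a₁ b₁ a₂ b₂ : ℤ, ∀ z : Fin n → ℤ, a₁.natAbs ≤ N → a₁ ≠ 0 →
    ∃ g m, Reach M' (vec a₁ b₁ a₂ b₂ z) (vec g m 0 0 z) := by
  intro N
  induction N with
  | zero => intro a₁ _ _ _ _ hN hne; exfalso; omega
  | succ N ih =>
    intro a₁ b₁ a₂ b₂ z hN hne
    have habs : 0 < |a₁| := abs_pos.2 hne
    have habsn : |a₁| = (a₁.natAbs : ℤ) := Int.abs_eq_natAbs a₁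
    -- clear a₂ to r₂ := a₂ % a₁
    have e₂eq : a₂ - a₂ / a₁ * a₁ = a₂ % a₁ := by rw [Int.emod_def]; ring
    have s1 : Reach M' (vec a₁ b₁ a₂ b₂ z) (vec a₁ (b₁ + a₂/a₁*b₂) (a₂ % a₁) b₂ z) := by
      have := reach_M2 hsymm a₁ b₁ a₂ b₂ z (a₂/a₁)
      rwa [e₂eq] at this
    set r₂ := a₂ % a₁ with hr₂
    set B₀ := b₁ + a₂/a₁*b₂ with hB₀
    -- clear b₂ to r₃ := b₂ % a₁
    have e₃eq : b₂ + -(b₂/a₁) * a₁ = b₂ % a₁ := by rw [Int.emod_def]; ring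
    have s2 : Reach M' (vec a₁ B₀ r₂ b₂ z) (vec a₁ (B₀ - -(b₂/a₁)*r₂) r₂ (b₂ % a₁) z) := by
      have := reach_M8 hsymm a₁ B₀ r₂ b₂ z (-(b₂/a₁))
      rwa [e₃eq] at this
    set r₃ := b₂ % a₁ with hr₃
    set B₁ := B₀ - -(b₂/a₁)*r₂ with hB₁
    have hS : Reach M' (vec a₁ b₁ a₂ b₂ z) (vec a₁ B₁ r₂ r₃ z) := s1.trans s2
    have hr₂0 : 0 ≤ r₂ := Int.emod_nonneg _ hne
    have hr₂lt : r₂ < (a₁.natAbs : ℤ) := by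
      rw [← habsn]
      have := Int.emod_lt_of_pos a₂ habs
      rwa [Int.emod_abs] at this
    have hr₃0 : 0 ≤ r₃ := Int.emod_nonneg _ hne
    have hr₃lt : r₃ < (a₁.natAbs : ℤ) := by
      rw [← habsn]
      have := Int.emod_lt_of_pos b₂ habs
      rwa [Int.emod_abs] at this
    by_cases h2 : r₂ = 0
    · by_cases h3 : r₃ = 0
      · rw [h2, h3] at hS
        exact ⟨a₁, B₁, hS⟩
      · -- reduce a₁ mod r₃ via M1
        have hr₃pos : 0 < r₃ := lt_of_le_of_ne hr₃0 (Ne.symm h3)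
        by_cases h0 : a₁ % r₃ = 0
        · have key : a₁ + (1 - a₁/r₃)*r₃ = r₃ := by
            have : a₁ % r₃ = a₁ - r₃ * (a₁ / r₃) := Int.emod_def _ _
            rw [this] at h0
            linarith [h0]
          have s3 := reach_M1 hsymm a₁ B₁ r₂ r₃ z (1 - a₁/r₃)
          rw [key] at s3
          obtain ⟨g, m, hgm⟩ := ih r₃ B₁ (r₂ - (1 - a₁/r₃)*B₁) r₃ z (by omega) (by omega)
          exact ⟨g, m, (hS.trans s3).trans hgm⟩
        · have key : a₁ + -(a₁/r₃)*r₃ = a₁ % r₃ := by rw [Int.emod_def]; ring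
          have s3 := reach_M1 hsymm a₁ B₁ r₂ r₃ z (-(a₁/r₃))
          rw [key] at s3
          have hb0 : 0 ≤ a₁ % r₃ := Int.emod_nonneg _ (ne_of_gt hr₃pos)
          have hblt : a₁ % r₃ < (r₃.natAbs : ℤ) := by
            rw [← Int.abs_eq_natAbs]
            have := Int.emod_lt_of_pos a₁ (abs_pos.2 (ne_of_gt hr₃pos))
            rwa [Int.emod_abs] at this
          obtain ⟨g, m, hgm⟩ := ih (a₁ % r₃) B₁ (r₂ - -(a₁/r₃)*B₁) r₃ z (by omega) h0
          exact ⟨g, m, (hS.trans s3).trans hgm⟩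
    · -- reduce a₁ mod r₂ via M3
      have hr₂pos : 0 < r₂ := lt_of_le_of_ne hr₂0 (Ne.symm h2)
      by_cases h0 : a₁ % r₂ = 0
      · have key : a₁ + (1 - a₁/r₂)*r₂ = r₂ := by
          have : a₁ % r₂ = a₁ - r₂ * (a₁ / r₂) := Int.emod_def _ _
          rw [this] at h0
          linarith [h0]
        have s3 := reach_M3 hsymm a₁ B₁ r₂ r₃ z (1 - a₁/r₂)
        rw [key] at s3
        obtain ⟨g, m, hgm⟩ := ih r₂ B₁ r₂ (r₃ - (1 - a₁/r₂)*B₁) z (by omega) (by omega)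
        exact ⟨g, m, (hS.trans s3).trans hgm⟩
      · have key : a₁ + -(a₁/r₂)*r₂ = a₁ % r₂ := by rw [Int.emod_def]; ring
        have s3 := reach_M3 hsymm a₁ B₁ r₂ r₃ z (-(a₁/r₂))
        rw [key] at s3
        have hb0 : 0 ≤ a₁ % r₂ := Int.emod_nonneg _ (ne_of_gt hr₂pos)
        have hblt : a₁ % r₂ < (r₂.natAbs : ℤ) := by
          rw [← Int.abs_eq_natAbs]
          have := Int.emod_lt_of_pos a₁ (abs_pos.2 (ne_of_gt hr₂pos))
          rwa [Int.emod_abs] at this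
        obtain ⟨g, m, hgm⟩ := ih (a₁ % r₂) B₁ r₂ (r₃ - -(a₁/r₂)*B₁) z (by omega) h0
        exact ⟨g, m, (hS.trans s3).trans hgm⟩

lemma SM (a₁ b₁ a₂ b₂ : ℤ) (z : Fin n → ℤ) (hnz : ¬(a₁ = 0 ∧ b₁ = 0 ∧ a₂ = 0 ∧ b₂ = 0)) :
    ∃ g m, Reach M' (vec a₁ b₁ a₂ b₂ z) (vec g m 0 0 z) := by
  by_cases h1 : a₁ ≠ 0
  · exact SM' hsymm a₁.natAbs a₁ b₁ a₂ b₂ z le_rfl h1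
  push_neg at h1
  subst h1
  by_cases h2 : a₂ ≠ 0
  · have s := reach_M3 hsymm 0 b₁ a₂ b₂ z 1
    obtain ⟨g, m, hgm⟩ := SM' hsymm (0 + 1*a₂).natAbs (0 + 1*a₂) b₁ a₂ (b₂ - 1*b₁) z le_rfl
      (by simpa using h2)
    exact ⟨g, m, s.trans hgm⟩
  push_neg at h2
  subst h2
  by_cases h3 : b₂ ≠ 0
  · have s := reach_M1 hsymm 0 b₁ 0 b₂ z 1
    obtain ⟨g, m, hgm⟩ := SM' hsymm (0 + 1*b₂).natAbs (0 + 1*b₂) b₁ (0 - 1*b₁) b₂ z le_rfl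
      (by simpa using h3)
    exact ⟨g, m, s.trans hgm⟩
  push_neg at h3
  subst h3
  have h4 : b₁ ≠ 0 := by tauto
  -- move b₁ into b₂ via M6 (k = 1), then into a₁ via M1
  have s1 := reach_M6 hsymm 0 b₁ 0 0 z 1
  -- target : vec (0 - 1*0) b₁ 0 (0 + 1*b₁) z
  have s2 := reach_M1 hsymm (0 - 1*0) b₁ 0 (0 + 1*b₁) z 1
  obtain ⟨g, m, hgm⟩ := SM' hsymm ((0 - 1*0) + 1*(0 + 1*b₁)).natAbs ((0 - 1*0) + 1*(0 + 1*b₁)) b₁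
    (0 - 1*b₁) (0 + 1*b₁) z le_rfl (by simpa using h4)
  exact ⟨g, m, (s1.trans s2).trans hgm⟩

end moves2

end EichAux
namespace EichAux

variable {n : ℕ} {M' : Matrix (Fin n) (Fin n) ℤ}

lemma even_bf (heven : ∀ u : Fin n → ℤ, ∃ k, u ⬝ᵥ (M' *ᵥ u) = 2*k) (y : Idx n → ℤ) :
    ∃ k, bf (MM M') y y = 2*k := by
  obtain ⟨k, hk⟩ := heven (fun i => y (Sum.inr i))
  refine ⟨y (Sum.inl 0) * y (Sum.inl 1) + y (Sum.inl 2) * y (Sum.inl 3) + k, ?_⟩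
  conv_lhs => rw [← vec_eta y]
  rw [bform, hk]
  ring

lemma vec_zero_eq : (vec 0 0 0 0 0 : Idx n → ℤ) = 0 := by
  funext i
  rcases i with i | i
  · fin_cases i <;> rfl
  · rfl

lemma reduce (hsymm : M'ᵀ = M') (hnd : M'.det ≠ 0)
    (heven : ∀ u : Fin n → ℤ, ∃ k, u ⬝ᵥ (M' *ᵥ u) = 2*k)
    (v : Idx n → ℤ) (hv0 : v ≠ 0) (d : ℤ) (hd : 0 < d)
    (hdvd : ∀ x, d ∣ bf (MM M') v x) (hmem : ∃ x, bf (MM M') v x = d) :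
    ∃ B, Reach M' v (vec 0 0 d B (fun i => v (Sum.inr i) % d)) := by
  set a₁ := v (Sum.inl 0) with ha₁
  set b₁ := v (Sum.inl 1) with hb₁
  set a₂ := v (Sum.inl 2) with ha₂
  set b₂ := v (Sum.inl 3) with hb₂
  set z : Fin n → ℤ := fun i => v (Sum.inr i) with hz
  have hv : v = vec a₁ b₁ a₂ b₂ z := (vec_eta v).symm
  -- Step 0: get a state with not-all-zero U-part
  have step0 : ∃ a₁' b₁' a₂' b₂', ¬(a₁' = 0 ∧ b₁' = 0 ∧ a₂' = 0 ∧ b₂' = 0) ∧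
      Reach M' (vec a₁ b₁ a₂ b₂ z) (vec a₁' b₁' a₂' b₂' z) := by
    by_cases hU : a₁ = 0 ∧ b₁ = 0 ∧ a₂ = 0 ∧ b₂ = 0
    · obtain ⟨h1, h2, h3, h4⟩ := hU
      have hzne : z ≠ 0 := by
        intro hzz
        apply hv0
        rw [hv, h1, h2, h3, h4, hzz, vec_zero_eq]
      have hMz : M' *ᵥ z ≠ 0 := by
        intro hMzz
        exact hnd (Matrix.exists_mulVec_eq_zero_iff.mp ⟨z, hzne, hMzz⟩)
      obtain ⟨j, hj⟩ : ∃ j, (M' *ᵥ z) j ≠ 0 := by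
        by_contra hc
        push_neg at hc
        exact hMz (funext hc)
      set c : Fin n → ℤ := Pi.single j 1 with hc
      have hcz : c ⬝ᵥ (M' *ᵥ z) = (M' *ᵥ z) j := by
        rw [hc, single_dotProduct, one_mul]
      obtain ⟨q, hq⟩ : ∃ q, bf (MM M') (vec 0 0 0 0 c) (vec 0 0 0 0 c) = 2*q := by
        obtain ⟨k, hk⟩ := heven c
        exact ⟨k, by rw [bform, hk]; ring⟩
      have s := reach_gen_e1 hsymm a₁ b₁ a₂ b₂ z 0 0 0 q c hq
      rw [h1, h2, h3, h4] at s ⊢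
      refine ⟨0 + 0*0 - (0*0 + 0*0 + 0*0 + c ⬝ᵥ (M' *ᵥ z)) - q*0, 0, 0 + 0*0, 0 + 0*0, ?_, ?_⟩
      · intro hcon
        obtain ⟨hcon1, -⟩ := hcon
        rw [hcz] at hcon1
        simp at hcon1
        exact hj hcon1
      · have hzz : z + (0:ℤ) • c = z := by simp
        rw [hzz] at s
        exact s
    · exact ⟨a₁, b₁, a₂, b₂, hU, Reach.refl _⟩
  obtain ⟨a₁', b₁', a₂', b₂', hnz', s0⟩ := step0
  obtain ⟨g, m, s1⟩ := SM hsymm a₁' b₁' a₂' b₂' z hnz'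
  have R1 : Reach M' v (vec g m 0 0 z) := by
    rw [hv]; exact s0.trans s1
  have hdvd1 : ∀ x, d ∣ bf (MM M') (vec g m 0 0 z) x := R1.dvd_pres hsymm hdvd
  have hdg : d ∣ g := by
    have := hdvd1 (vec 0 1 0 0 0)
    rwa [bform, show g*1 + m*0 + 0*0 + 0*0 + z ⬝ᵥ (M' *ᵥ 0) = g by simp] at this
  have hdm : d ∣ m := by
    have := hdvd1 (vec 1 0 0 0 0)
    rwa [bform, show g*0 + m*1 + 0*0 + 0*0 + z ⬝ᵥ (M' *ᵥ 0) = m by simp] at this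
  -- Step A: use a dual vector to put d into the a₂ slot
  obtain ⟨x, hx⟩ := R1.mem_pres hsymm hmem
  set x₁ := x (Sum.inl 0) with hx₁
  set x₂ := x (Sum.inl 1) with hx₂
  set x₃ := x (Sum.inl 2) with hx₃
  set xz : Fin n → ℤ := fun i => x (Sum.inr i) with hxz
  have hxval : g*x₂ + m*x₁ + xz ⬝ᵥ (M' *ᵥ z) = d := by
    have hxv : x = vec x₁ x₂ x₃ (x (Sum.inl 3)) xz := (vec_eta x).symm
    rw [hxv, bform] at hx
    have hcomm : z ⬝ᵥ (M' *ᵥ xz) = xz ⬝ᵥ (M' *ᵥ z) := bf_comm hsymm z xz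
    rw [hcomm] at hx
    linarith [hx]
  obtain ⟨q, hq⟩ : ∃ q, bf (MM M') (vec (-x₁) (-x₂) (-x₃) 0 (-xz)) (vec (-x₁) (-x₂) (-x₃) 0 (-xz))
      = 2*q := even_bf heven _
  have sA := reach_gen_e2 hsymm g m 0 0 z (-x₁) (-x₂) (-x₃) q (-xz) hq
  have sA' : Reach M' (vec g m 0 0 z) (vec g m d 0 z) := by
    have hcv : vec (g + 0*(-x₁)) (m + 0*(-x₂))
        (0 + 0*(-x₃) - ((-x₁)*m + (-x₂)*g + (-x₃)*0 + (-xz) ⬝ᵥ (M' *ᵥ z)) - q*0)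
        (0:ℤ) (z + (0:ℤ) • (-xz)) = vec g m d 0 z := by
      refine vec_congr (by ring) (by ring) ?_ rfl (by simp)
      rw [neg_dotProduct]
      linarith [hxval]
    rwa [hcv] at sA
  -- Step B: clear g (M6 with k = g/d)
  have sB := reach_M6 hsymm g m d 0 z (g/d)
  have hgd : g - g/d*d = 0 := by
    rw [Int.ediv_mul_cancel hdg]; ring
  have sB' : Reach M' (vec g m d 0 z) (vec 0 m d (g/d*m) z) := by
    have hcv : vec (g - g/d*d) m d (0 + g/d*m) z = vec 0 m d (g/d*m) z :=
      vec_congr hgd rfl rfl (by ring) rfl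
    rwa [hcv] at sB
  -- Step C: clear m (M8 with k = m/d)
  have sC := reach_M8 hsymm 0 m d (g/d*m) z (m/d)
  have hmd : m - m/d*d = 0 := by
    rw [Int.ediv_mul_cancel hdm]; ring
  have sC' : Reach M' (vec 0 m d (g/d*m) z) (vec 0 0 d (g/d*m) z) := by
    have hcv : vec 0 (m - m/d*d) d (g/d*m + m/d*0) z = vec 0 0 d (g/d*m) z :=
      vec_congr rfl hmd rfl (by ring) rfl
    rwa [hcv] at sC
  -- Step D: normalize z mod d
  set u : Fin n → ℤ := fun i => (z i % d - z i)/d with hu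
  obtain ⟨qu, hqu⟩ : ∃ qu, bf (MM M') (vec 0 0 0 0 u) (vec 0 0 0 0 u) = 2*qu :=
    even_bf heven _
  have sD := reach_gen_f2 hsymm 0 0 d (g/d*m) z 0 0 0 qu u hqu
  have hzfix : z + d • u = fun i => z i % d := by
    funext i
    have hdvd' : d ∣ z i % d - z i := by
      rw [Int.emod_def]
      exact ⟨-(z i / d), by ring⟩
    have := Int.mul_ediv_cancel' hdvd'
    simp only [Pi.add_apply, Pi.smul_apply, smul_eq_mul, hu]
    omega
  refine ⟨g/d*m + d*0 - (0*0 + 0*0 + 0*d + u ⬝ᵥ (M' *ᵥ z)) - qu*d, ?_⟩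
  have hcv : vec (0 + d*0) (0 + d*0) d
      (g/d*m + d*0 - (0*0 + 0*0 + 0*d + u ⬝ᵥ (M' *ᵥ z)) - qu*d) (z + d • u)
      = vec 0 0 d (g/d*m + d*0 - (0*0 + 0*0 + 0*d + u ⬝ᵥ (M' *ᵥ z)) - qu*d)
        (fun i => z i % d) := by
    refine vec_congr (by ring) (by ring) rfl rfl hzfix
  rw [hcv] at sD
  exact ((R1.trans sA').trans (sB'.trans sC')).trans sD

end EichAux
namespace EichAux

variable {n : ℕ} {M' : Matrix (Fin n) (Fin n) ℤ}

noncomputable section Qlevel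

abbrev cq : ℤ →+* ℚ := Int.castRingHom ℚ

lemma MMQ_symm (hsymm : M'ᵀ = M') : ((MM M').map (cq : ℤ → ℚ))ᵀ = (MM M').map (cq : ℤ → ℚ) := by
  rw [← Matrix.transpose_map, MM_symm hsymm]

lemma prodMat_map (f : ℤ →+* ℚ) (l : List (TD M')) :
    (prodMat l).map f = ((l.map TD.mat).map (fun A => A.map f)).prod := by
  induction l with
  | nil => simp [prodMat, Matrix.map_one f f.map_zero f.map_one]
  | cons d l ih =>
    simp only [prodMat, List.map_cons, List.prod_cons] at *
    rw [Matrix.map_mul, ih]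

lemma castVec_comp (y : Idx n → ℤ) : (fun i => ((y i : ℚ))) = (cq : ℤ → ℚ) ∘ y := rfl

lemma disc_triv (hsymm : M'ᵀ = M') (l : List (TD M')) (x : Idx n → ℚ)
    (hx : ∀ y : Idx n → ℤ, ∃ k : ℤ, bf ((MM M').map (cq : ℤ → ℚ)) x (fun i => (y i : ℚ)) = k) :
    ∃ zz : Idx n → ℤ, ((prodMat l).map (cq : ℤ → ℚ)) *ᵥ x - x = fun i => (zz i : ℚ) := by
  induction l generalizing x with
  | nil =>
    refine ⟨0, ?_⟩
    rw [show (prodMat ([] : List (TD M'))) = 1 from by simp [prodMat],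
      Matrix.map_one _ cq.map_zero cq.map_one, one_mulVec]
    funext i
    simp
  | cons d l ih =>
    set MQ := (MM M').map (cq : ℤ → ℚ) with hMQ
    set P := prodMat l with hP
    set PQ := P.map (cq : ℤ → ℚ) with hPQ
    -- the inverse
    set Pinv := prodMat (invList l) with hPinv
    have hPiso : Pᵀ * MM M' * P = MM M' := prodMat_isometry hsymm l
    have hPQiso : PQᵀ * MQ * PQ = MQ := by
      rw [hPQ, hMQ, ← Matrix.transpose_map, ← Matrix.map_mul, ← Matrix.map_mul, hPiso]
    have hy : ∀ y : Idx n → ℤ, ∃ k : ℤ, bf MQ (PQ *ᵥ x) (fun i => (y i : ℚ)) = k := by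
      intro y
      obtain ⟨k, hk⟩ := hx (Pinv *ᵥ y)
      refine ⟨k, ?_⟩
      have hrep : (fun i => ((y i : ℚ))) = PQ *ᵥ (fun i => ((Pinv *ᵥ y) i : ℚ)) := by
        rw [castVec_comp, castVec_comp, hPQ, map_mulVec' cq, mulVec_mulVec,
          prodMat_inv_right hsymm]
        rw [one_mulVec]
      rw [hrep]
      have : bf MQ (PQ *ᵥ x) (PQ *ᵥ (fun i => ((Pinv *ᵥ y) i : ℚ)))
          = bf MQ x (fun i => ((Pinv *ᵥ y) i : ℚ)) := by
        rw [bf_mulVec_eq, hPQiso]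
        rfl
      rw [this]
      exact hk
    obtain ⟨z₁, hz₁⟩ := ih x hx
    set y := PQ *ᵥ x with hyy
    -- transvection step
    have hTQ : (d.mat).map (cq : ℤ → ℚ)
        = Tm MQ ((cq : ℤ → ℚ) ∘ d.e) ((cq : ℤ → ℚ) ∘ d.a) ((d.q : ℚ)) := by
      rw [TD.mat, map_Tm]
      rfl
    obtain ⟨k₁, hk₁⟩ := hy d.e
    obtain ⟨k₂, hk₂⟩ := hy d.a
    have hbe : bf MQ ((cq : ℤ → ℚ) ∘ d.e) y = k₁ := by
      rw [bf_comm (MMQ_symm hsymm)]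
      exact hk₁
    have hba : bf MQ ((cq : ℤ → ℚ) ∘ d.a) y = k₂ := by
      rw [bf_comm (MMQ_symm hsymm)]
      exact hk₂
    refine ⟨k₁ • d.a - (k₂ + d.q * k₁) • d.e + z₁, ?_⟩
    have hprod : prodMat (d :: l) = d.mat * P := by simp [prodMat, hP]
    rw [hprod, Matrix.map_mul, ← mulVec_mulVec, ← hPQ, ← hyy, hTQ,
      Tm_mulVec (MMQ_symm hsymm), hbe, hba]
    funext i
    have hz₁i := congrFun hz₁ i
    simp only [Pi.sub_apply] at hz₁i
    simp only [Pi.add_apply, Pi.sub_apply, Pi.smul_apply, Function.comp_apply, smul_eq_mul,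
      cq, Int.coe_castRingHom]
    push_cast
    linarith [hz₁i]

end Qlevel

end EichAux
namespace EichAux

variable {n : ℕ} {M' : Matrix (Fin n) (Fin n) ℤ}

noncomputable section Rlevel

abbrev cr : ℤ →+* ℝ := Int.castRingHom ℝ

def MRm (M' : Matrix (Fin n) (Fin n) ℤ) : Matrix (Idx n) (Idx n) ℝ :=
  (MM M').map (cr : ℤ → ℝ)

lemma MR_symm (hsymm : M'ᵀ = M') : (MRm M')ᵀ = MRm M' := by
  rw [MRm, ← Matrix.transpose_map, MM_symm hsymm]

def TDr (d : TD M') (t : ℝ) : Matrix (Idx n) (Idx n) ℝ :=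
  Tm (MRm M') ((cr : ℤ → ℝ) ∘ d.e) (t • ((cr : ℤ → ℝ) ∘ d.a)) (t^2 * (d.q : ℝ))

lemma TDr_he (d : TD M') :
    bf (MRm M') ((cr : ℤ → ℝ) ∘ d.e) ((cr : ℤ → ℝ) ∘ d.e) = 0 := by
  rw [MRm, map_bf cr, d.he]
  simp

lemma TDr_hea (d : TD M') (t : ℝ) :
    bf (MRm M') ((cr : ℤ → ℝ) ∘ d.e) (t • ((cr : ℤ → ℝ) ∘ d.a)) = 0 := by
  rw [bf_smul_right, MRm, map_bf cr, d.hea]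
  simp

lemma TDr_haa (d : TD M') (t : ℝ) :
    bf (MRm M') (t • ((cr : ℤ → ℝ) ∘ d.a)) (t • ((cr : ℤ → ℝ) ∘ d.a)) = 2 * (t^2 * (d.q : ℝ)) := by
  rw [bf_smul_right, bf_smul_left, MRm, map_bf cr, d.haa]
  simp only [cr, Int.coe_castRingHom]
  push_cast
  ring

lemma TDr_isometry (hsymm : M'ᵀ = M') (d : TD M') (t : ℝ) :
    (TDr d t)ᵀ * MRm M' * TDr d t = MRm M' :=
  Tm_isometry (MR_symm hsymm) (TDr_he d) (TDr_hea d t) (TDr_haa d t)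

def pathM (l : List (TD M')) (t : ℝ) : Matrix (Idx n) (Idx n) ℝ :=
  (l.map (fun d => TDr d t)).prod

lemma Tm_trivial (M : Matrix (Idx n) (Idx n) ℝ) (e : Idx n → ℝ) :
    Tm M e 0 0 = 1 := by
  unfold Tm
  have h1 : vecMulVec (0 : Idx n → ℝ) (M *ᵥ e) = 0 := by
    ext i j; simp [vecMulVec_apply]
  have h2 : vecMulVec e (M *ᵥ (0 : Idx n → ℝ)) = 0 := by
    ext i j; simp [vecMulVec_apply, mulVec_zero]
  rw [h1, h2]
  simp

lemma pathM_zero (l : List (TD M')) : pathM l 0 = 1 := by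
  induction l with
  | nil => simp [pathM]
  | cons d l ih =>
    simp only [pathM, List.map_cons, List.prod_cons] at *
    rw [ih, Matrix.mul_one]
    show TDr d 0 = 1
    rw [TDr]
    norm_num
    exact Tm_trivial _ _

lemma pathM_one (l : List (TD M')) : pathM l 1 = (prodMat l).map (cr : ℤ → ℝ) := by
  induction l with
  | nil => simp [pathM, prodMat, Matrix.map_one _ cr.map_zero cr.map_one]
  | cons d l ih =>
    simp only [pathM, prodMat, List.map_cons, List.prod_cons] at *
    rw [Matrix.map_mul, ih]
    congr 1
    rw [TD.mat, map_Tm cr]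
    show TDr d 1 = Tm ((MM M').map cr) _ _ _
    rw [TDr]
    norm_num
    rfl

lemma pathM_isometry (hsymm : M'ᵀ = M') (l : List (TD M')) (t : ℝ) :
    (pathM l t)ᵀ * MRm M' * pathM l t = MRm M' := by
  induction l with
  | nil => simp [pathM]
  | cons d l ih =>
    have h2 : pathM (d :: l) t = TDr d t * pathM l t := by simp [pathM]
    rw [h2, Matrix.transpose_mul]
    calc (pathM l t)ᵀ * (TDr d t)ᵀ * MRm M' * (TDr d t * pathM l t)
        = (pathM l t)ᵀ * ((TDr d t)ᵀ * MRm M' * TDr d t) * pathM l t := by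
          simp only [Matrix.mul_assoc]
      _ = MRm M' := by rw [TDr_isometry hsymm, ih]

lemma TDr_cont (d : TD M') : Continuous (fun t => TDr d t) := by
  apply continuous_matrix
  intro i j
  have hrw : ∀ t : ℝ, TDr d t i j =
      (1 : Matrix (Idx n) (Idx n) ℝ) i j
        + t * (((cr : ℤ → ℝ) ∘ d.a) i * (MRm M' *ᵥ ((cr : ℤ → ℝ) ∘ d.e)) j)
        - t * (((cr : ℤ → ℝ) ∘ d.e) i * (MRm M' *ᵥ ((cr : ℤ → ℝ) ∘ d.a)) j)
        - (t^2 * (d.q : ℝ)) * (((cr : ℤ → ℝ) ∘ d.e) i * (MRm M' *ᵥ ((cr : ℤ → ℝ) ∘ d.e)) j) := by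
    intro t
    simp only [TDr, Tm, Matrix.add_apply, Matrix.sub_apply, Matrix.smul_apply,
      vecMulVec_apply, Pi.smul_apply, smul_eq_mul, mulVec_smul]
    ring
  simp only [hrw]
  fun_prop

lemma pathM_cont (l : List (TD M')) : Continuous (fun t => pathM l t) := by
  induction l with
  | nil =>
    simp only [pathM, List.map_nil, List.prod_nil]
    exact continuous_const
  | cons d l ih =>
    have : (fun t => pathM (d :: l) t) = fun t => TDr d t * pathM l t := by
      funext t; simp [pathM]
    rw [this]
    exact (TDr_cont d).matrix_mul ih

lemma detMM : (MM M').det = M'.det := by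
  rw [MM, Matrix.det_fromBlocks_zero₂₁]
  have : U2G.det = 1 := by decide
  rw [this, one_mul]

lemma pathM_det_sq (hsymm : M'ᵀ = M') (hnd : M'.det ≠ 0) (l : List (TD M')) (t : ℝ) :
    (pathM l t).det ^ 2 = 1 := by
  have h := pathM_isometry hsymm l t
  have hdet := congrArg Matrix.det h
  rw [Matrix.det_mul, Matrix.det_mul, Matrix.det_transpose] at hdet
  have hMR : (MRm M').det ≠ 0 := by
    rw [MRm, show (MM M').map (cr : ℤ → ℝ) = cr.mapMatrix (MM M') from
      (RingHom.mapMatrix_apply _ _).symm, ← RingHom.map_det]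
    simp only [cr, Int.coe_castRingHom, Int.cast_ne_zero, ne_eq]
    rw [detMM]
    exact hnd
  have : (pathM l t).det * (pathM l t).det * (MRm M').det = 1 * (MRm M').det := by
    rw [one_mul]; linarith [hdet]
  have h2 := mul_right_cancel₀ hMR this
  nlinarith [h2]

lemma prodMat_det_one (hsymm : M'ᵀ = M') (hnd : M'.det ≠ 0) (l : List (TD M')) :
    (prodMat l).det = 1 := by
  set f : ℝ → ℝ := fun t => (pathM l t).det with hf
  have hcont : Continuous f := (pathM_cont l).matrix_det
  have hne : ∀ t, f t ≠ 0 := by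
    intro t h0
    have := pathM_det_sq hsymm hnd l t
    rw [hf] at *
    simp only [h0] at this
    norm_num at this
  have hf0 : f 0 = 1 := by rw [hf]; simp [pathM_zero]
  have hf1 : f 1 = ((prodMat l).det : ℝ) := by
    rw [hf]
    simp only
    rw [pathM_one, show (prodMat l).map (cr : ℤ → ℝ) = cr.mapMatrix (prodMat l) from
      (RingHom.mapMatrix_apply _ _).symm, ← RingHom.map_det]
    rfl
  have hsq := pathM_det_sq hsymm hnd l 1
  have hf1' : f 1 = 1 ∨ f 1 = -1 := by
    have : (f 1 - 1) * (f 1 + 1) = 0 := by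
      have : f 1 ^ 2 = 1 := hsq
      nlinarith [this]
    rcases mul_eq_zero.mp this with h | h
    · left; linarith
    · right; linarith
  rcases hf1' with h | h
  · have : ((prodMat l).det : ℝ) = ((1 : ℤ) : ℝ) := by rw [← hf1, h]; simp
    exact_mod_cast this
  · exfalso
    have hmem : (0:ℝ) ∈ Set.Icc (f 1) (f 0) := by
      rw [hf0, h]; constructor <;> norm_num
    have := intermediate_value_Icc' (by norm_num : (0:ℝ) ≤ 1) hcont.continuousOn hmem
    obtain ⟨t, -, ht⟩ := this
    exact hne t ht

end Rlevel

end EichAux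
namespace EichAux

variable {n : ℕ} {M' : Matrix (Fin n) (Fin n) ℤ}

noncomputable section Orient

lemma bilinR_eq (x y : Idx n → ℝ) : bilinR (MM M') x y = bf (MRm M') x y := rfl

lemma bf_sum_right' {γ : Type*} (M : Matrix (Idx n) (Idx n) ℝ) (x : Idx n → ℝ)
    (s : Finset γ) (f : γ → Idx n → ℝ) :
    bf M x (∑ j ∈ s, f j) = ∑ j ∈ s, bf M x (f j) := by
  classical
  induction s using Finset.induction with
  | empty => simp
  | insert _ _ hnotmem ih =>
    rw [Finset.sum_insert hnotmem, Finset.sum_insert hnotmem, bf_add_right, ih]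

lemma bf_sum_left' {γ : Type*} {M : Matrix (Idx n) (Idx n) ℝ} (hM : Mᵀ = M) (x : Idx n → ℝ)
    (s : Finset γ) (f : γ → Idx n → ℝ) :
    bf M (∑ j ∈ s, f j) x = ∑ j ∈ s, bf M (f j) x := by
  rw [bf_comm hM, bf_sum_right']
  exact Finset.sum_congr rfl fun j _ => bf_comm hM x (f j)

lemma mulVec_sum' {γ : Type*} (G : Matrix (Idx n) (Idx n) ℝ) (s : Finset γ)
    (f : γ → Idx n → ℝ) : G *ᵥ (∑ j ∈ s, f j) = ∑ j ∈ s, G *ᵥ f j := by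
  classical
  induction s using Finset.induction with
  | empty => simp
  | insert _ _ hnotmem ih =>
    rw [Finset.sum_insert hnotmem, Finset.sum_insert hnotmem, mulVec_add, ih]

lemma gram_expand (hsymm : M'ᵀ = M') {k : ℕ} (w : Fin k → Idx n → ℝ) (c : Fin k → ℝ) :
    bf (MRm M') (∑ i, c i • w i) (∑ j, c j • w j)
      = c ⬝ᵥ ((Matrix.of fun i j => bf (MRm M') (w i) (w j)) *ᵥ c) := by
  rw [bf_sum_left' (MR_symm hsymm)]
  have hrhs : c ⬝ᵥ ((Matrix.of fun i j => bf (MRm M') (w i) (w j)) *ᵥ c)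
      = ∑ i, c i * (∑ j, bf (MRm M') (w i) (w j) * c j) := rfl
  rw [hrhs]
  refine Finset.sum_congr rfl fun i _ => ?_
  rw [bf_smul_left, bf_sum_right']
  congr 1
  refine Finset.sum_congr rfl fun j _ => ?_
  rw [bf_smul_right]
  ring

lemma gram_ne_zero (hsymm : M'ᵀ = M') {k : ℕ} (w : Fin k → Idx n → ℝ)
    (hmax : IsMaxPosTuple (MM M') w) (G : Matrix (Idx n) (Idx n) ℝ)
    (hG : Gᵀ * MRm M' * G = MRm M') :
    (Matrix.of fun i j => bf (MRm M') (w i) (G *ᵥ w j)).det ≠ 0 := by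
  intro hdet
  obtain ⟨c, hc0, hc⟩ := Matrix.exists_mulVec_eq_zero_iff.mpr hdet
  set u : Idx n → ℝ := ∑ j, c j • w j with hu
  set u' : Idx n → ℝ := G *ᵥ u with hu'
  have hGu : u' = ∑ j, c j • (G *ᵥ w j) := by
    rw [hu', hu, mulVec_sum']
    exact Finset.sum_congr rfl fun j _ => mulVec_smul G (c j) (w j)
  have horth : ∀ i, bf (MRm M') (w i) u' = 0 := by
    intro i
    rw [hGu, bf_sum_right']
    have := congrFun hc i
    simp only [mulVec, dotProduct, Matrix.of_apply, Pi.zero_apply] at this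
    rw [← this]
    exact Finset.sum_congr rfl fun j _ => by rw [bf_smul_right]; ring
  have hGram := hmax.1
  have huu : 0 < bf (MRm M') u u := by
    have h2 := hGram.dotProduct_mulVec_pos hc0
    rw [star_trivial] at h2
    rw [hu, gram_expand hsymm]
    have : (Matrix.of fun i j => bilinR (MM M') (w i) (w j))
        = (Matrix.of fun i j => bf (MRm M') (w i) (w j)) := rfl
    rw [this] at h2
    exact h2
  have huu' : bf (MRm M') u' u' = bf (MRm M') u u := by
    rw [hu', bf_mulVec_eq, hG]
    rfl
  set w' : Fin (k+1) → Idx n → ℝ := Fin.snoc w u' with hw'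
  apply hmax.2 w'
  refine Matrix.PosDef.of_dotProduct_mulVec_pos ?_ ?_
  · -- Hermitian
    ext i j
    simp only [Matrix.conjTranspose_apply, Matrix.of_apply, star_trivial]
    rw [bilinR_eq, bilinR_eq]
    exact bf_comm (MR_symm hsymm) (w' j) (w' i)
  · intro x hx
    rw [star_trivial]
    have hexp : x ⬝ᵥ ((Matrix.of fun i j => bilinR (MM M') (w' i) (w' j)) *ᵥ x)
        = bf (MRm M') (∑ i, x i • w' i) (∑ j, x j • w' j) := by
      rw [gram_expand hsymm]
      rfl
    rw [hexp]
    have hsplit : (∑ i, x i • w' i)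
        = (∑ i : Fin k, x i.castSucc • w i) + x (Fin.last k) • u' := by
      rw [Fin.sum_univ_castSucc]
      congr 1
      · exact Finset.sum_congr rfl fun i _ => by rw [hw', Fin.snoc_castSucc]
      · rw [hw', Fin.snoc_last]
    rw [hsplit]
    set y : Fin k → ℝ := fun i => x i.castSucc with hy
    set s₀ : Idx n → ℝ := ∑ i : Fin k, y i • w i with hs₀
    set xl := x (Fin.last k) with hxl
    have horth₀ : bf (MRm M') s₀ u' = 0 := by
      rw [hs₀, bf_sum_left' (MR_symm hsymm)]
      refine Finset.sum_eq_zero fun i _ => ?_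
      rw [bf_smul_left, horth i, mul_zero]
    have horth₀' : bf (MRm M') u' s₀ = 0 := by
      rw [bf_comm (MR_symm hsymm)]
      exact horth₀
    have hquad : bf (MRm M') (s₀ + xl • u') (s₀ + xl • u')
        = bf (MRm M') s₀ s₀ + xl^2 * bf (MRm M') u' u' := by
      rw [bf_add_left, bf_add_right, bf_add_right, bf_smul_left, bf_smul_right,
        bf_smul_left, bf_smul_right, horth₀, horth₀']
      ring
    rw [hquad]
    by_cases hy0 : y = 0
    · have hxl0 : xl ≠ 0 := by
        intro hxl0
        apply hx
        funext i
        refine Fin.lastCases ?_ ?_ i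
        · exact hxl0
        · intro j
          exact congrFun hy0 j
      have hs00 : s₀ = 0 := by
        rw [hs₀, hy0]
        simp
      rw [hs00, huu']
      simp only [bf_zero_left, zero_add]
      have := mul_pos (mul_pos (abs_pos.mpr hxl0) (abs_pos.mpr hxl0)) huu
      nlinarith [huu, sq_abs xl, abs_pos.mpr hxl0]
    · have h1 : 0 < bf (MRm M') s₀ s₀ := by
        rw [hs₀, gram_expand hsymm]
        have h2 := hGram.dotProduct_mulVec_pos hy0
        rw [star_trivial] at h2
        exact h2
      have h2 : 0 ≤ xl^2 * bf (MRm M') u' u' := by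
        rw [huu']
        positivity
      linarith

lemma prodMat_orient (hsymm : M'ᵀ = M') (l : List (TD M')) :
    OrientPres (MM M') (prodMat l) := by
  intro k w hmax
  set F : ℝ → ℝ :=
    fun t => (Matrix.of fun i j : Fin k => bf (MRm M') (w i) (pathM l t *ᵥ w j)).det with hF
  have hcont : Continuous F := by
    apply Continuous.matrix_det
    apply continuous_matrix
    intro i j
    have : (fun t => (Matrix.of fun i j : Fin k => bf (MRm M') (w i) (pathM l t *ᵥ w j)) i j)
        = fun t => (w i) ⬝ᵥ (MRm M' *ᵥ (pathM l t *ᵥ w j)) := rfl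
    rw [this]
    apply Continuous.dotProduct continuous_const
    apply Continuous.matrix_mulVec continuous_const
    exact (pathM_cont l).matrix_mulVec continuous_const
  have hne : ∀ t, F t ≠ 0 := fun t =>
    gram_ne_zero hsymm w hmax (pathM l t) (pathM_isometry hsymm l t)
  have hF0 : 0 < F 0 := by
    rw [hF]
    simp only [pathM_zero, one_mulVec]
    have : (Matrix.of fun i j : Fin k => bf (MRm M') (w i) (w j))
        = (Matrix.of fun i j : Fin k => bilinR (MM M') (w i) (w j)) := rfl
    rw [this]
    exact hmax.1.det_pos
  have hF1 : 0 < F 1 := by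
    rcases lt_or_gt_of_ne (hne 1) with hlt | hgt
    · exfalso
      have hmem : (0:ℝ) ∈ Set.Icc (F 1) (F 0) := ⟨le_of_lt hlt, le_of_lt hF0⟩
      obtain ⟨t, -, ht⟩ := intermediate_value_Icc' (by norm_num : (0:ℝ) ≤ 1)
        hcont.continuousOn hmem
      exact hne t ht
    · exact hgt
  have : F 1 = (Matrix.of fun i j : Fin k =>
      bilinR (MM M') (w i) (((prodMat l).map (Int.cast : ℤ → ℝ)) *ᵥ w j)).det := by
    rw [hF]
    simp only [pathM_one]
    rfl
  rw [← this]
  exact hF1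

end Orient

end EichAux
namespace EichAux

variable {n : ℕ} {M' : Matrix (Fin n) (Fin n) ℤ}

lemma div_eq_div (v w u : Idx n → ℤ) (dv dw : ℤ) (hdv : 0 < dv) (hdw : 0 < dw)
    (hvprim : IsPrimitiveVec v) (hwprim : IsPrimitiveVec w)
    (hu : dw • v - dv • w = (dv * dw) • u) : dv = dw := by
  have hcomp : ∀ i, dw * v i - dv * w i = dv * dw * u i := by
    intro i
    have := congrFun hu i
    simpa [Pi.sub_apply, Pi.smul_apply, smul_eq_mul] using this
  set g : ℤ := (Int.gcd dv dw : ℤ) with hgdef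
  have hgdvd1 : g ∣ dv := Int.gcd_dvd_left _ _
  have hgdvd2 : g ∣ dw := Int.gcd_dvd_right _ _
  have hgne : Int.gcd dv dw ≠ 0 := by
    rw [Ne, Int.gcd_eq_zero_iff]
    rintro ⟨h, -⟩
    omega
  have hgpos : 0 < g := by
    rw [hgdef]
    exact_mod_cast Nat.pos_of_ne_zero hgne
  set a : ℤ := dv / g with hadef
  set b : ℤ := dw / g with hbdef
  have ha : dv = g * a := (Int.mul_ediv_cancel' hgdvd1).symm
  have hb : dw = g * b := (Int.mul_ediv_cancel' hgdvd2).symm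
  have hcop : IsCoprime a b := by
    rw [Int.isCoprime_iff_gcd_eq_one, hadef, hbdef, hgdef]
    exact Int.gcd_div_gcd_div_gcd (Nat.pos_of_ne_zero hgne)
  have hapos : 0 < a := by nlinarith
  have hbpos : 0 < b := by nlinarith
  -- dv ∣ dw    (a = 1)
  have hva : ∀ i, a ∣ v i := by
    intro i
    have hc := hcomp i
    rw [ha, hb] at hc
    have h1 : g * (b * v i) = g * (a * (w i + g * b * u i)) := by linear_combination hc
    exact hcop.dvd_of_dvd_mul_left ⟨w i + g * b * u i, mul_left_cancel₀ (ne_of_gt hgpos) h1⟩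
  have haunit : IsUnit a := hvprim a (fun i => v i / a)
    (funext fun i => (Int.mul_ediv_cancel' (hva i)).symm)
  have ha1 : a = 1 := by
    rcases Int.isUnit_iff.mp haunit with h | h
    · exact h
    · omega
  -- dw ∣ dv    (b = 1)
  have hwb : ∀ i, b ∣ w i := by
    intro i
    have hc := hcomp i
    rw [ha, hb] at hc
    have h1 : g * (a * w i) = g * (b * (v i - g * a * u i)) := by linear_combination -hc
    exact hcop.symm.dvd_of_dvd_mul_left ⟨v i - g * a * u i, mul_left_cancel₀ (ne_of_gt hgpos) h1⟩
  have hbunit : IsUnit b := hwprim b (fun i => w i / b)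
    (funext fun i => (Int.mul_ediv_cancel' (hwb i)).symm)
  have hb1 : b = 1 := by
    rcases Int.isUnit_iff.mp hbunit with h | h
    · exact h
    · omega
  rw [ha, hb, ha1, hb1]

end EichAux
open EichAux in
theorem stmt_3' (n : ℕ) (M' : Matrix (Fin n) (Fin n) ℤ)
    (hsymm : M'ᵀ = M') (hnd : M'.det ≠ 0)
    (heven : ∀ v : Fin n → ℤ, ∃ k : ℤ, v ⬝ᵥ (M' *ᵥ v) = 2 * k)
    (v w : (Fin 4 ⊕ Fin n) → ℤ)
    (hvprim : IsPrimitiveVec v) (hwprim : IsPrimitiveVec w)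
    (hsq : v ⬝ᵥ ((Matrix.fromBlocks U2G 0 0 M') *ᵥ v) =
      w ⬝ᵥ ((Matrix.fromBlocks U2G 0 0 M') *ᵥ w))
    (dv dw : ℤ) (hdv : 0 < dv) (hdw : 0 < dw)
    (hdvdvd : ∀ x : (Fin 4 ⊕ Fin n) → ℤ, dv ∣ v ⬝ᵥ ((Matrix.fromBlocks U2G 0 0 M') *ᵥ x))
    (hdvmem : ∃ x : (Fin 4 ⊕ Fin n) → ℤ, v ⬝ᵥ ((Matrix.fromBlocks U2G 0 0 M') *ᵥ x) = dv)
    (hdwdvd : ∀ x : (Fin 4 ⊕ Fin n) → ℤ, dw ∣ w ⬝ᵥ ((Matrix.fromBlocks U2G 0 0 M') *ᵥ x))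
    (hdwmem : ∃ x : (Fin 4 ⊕ Fin n) → ℤ, w ⬝ᵥ ((Matrix.fromBlocks U2G 0 0 M') *ᵥ x) = dw)
    (hclass : ∃ u : (Fin 4 ⊕ Fin n) → ℤ, dw • v - dv • w = (dv * dw) • u) :
    ∃ g : Matrix (Fin 4 ⊕ Fin n) (Fin 4 ⊕ Fin n) ℤ,
      IsIsometry (Matrix.fromBlocks U2G 0 0 M') g ∧
      g.det = 1 ∧
      OrientPres (Matrix.fromBlocks U2G 0 0 M') g ∧
      (∀ x : (Fin 4 ⊕ Fin n) → ℚ,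
        (∀ y : (Fin 4 ⊕ Fin n) → ℤ, ∃ k : ℤ,
          bilinQ (Matrix.fromBlocks U2G 0 0 M') x (castVec y) = (k : ℚ)) →
        ∃ z : (Fin 4 ⊕ Fin n) → ℤ,
          (g.map (Int.cast : ℤ → ℚ)) *ᵥ x - x = castVec z) ∧
      g *ᵥ v = w := by
  obtain ⟨u, hu⟩ := hclass
  have hvne : v ≠ 0 := by
    intro h
    have h2 := hvprim 0 0 (by rw [h]; funext i; simp)
    rw [Int.isUnit_iff] at h2
    omega
  have hwne : w ≠ 0 := by
    intro h
    have h2 := hwprim 0 0 (by rw [h]; funext i; simp)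
    rw [Int.isUnit_iff] at h2
    omega
  have hd : dv = dw := div_eq_div v w u dv dw hdv hdw hvprim hwprim hu
  rw [← hd] at hdw hdwdvd hdwmem hu
  obtain ⟨B₁, Rv⟩ := reduce hsymm hnd heven v hvne dv hdv hdvdvd hdvmem
  obtain ⟨B₂, Rw⟩ := reduce hsymm hnd heven w hwne dv hdv hdwdvd hdwmem
  -- the two canonical representatives agree
  have hvw : ∀ i, v i - w i = dv * u i := by
    intro i
    have h1 := congrFun hu i
    simp only [Pi.sub_apply, Pi.smul_apply, smul_eq_mul] at h1
    have h2 : dv * (v i - w i) = dv * (dv * u i) := by ring_nf; linarith [h1]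
    exact mul_left_cancel₀ (ne_of_gt hdv) h2
  have hzs : (fun i => w (Sum.inr i) % dv) = (fun i => v (Sum.inr i) % dv) := by
    funext i
    rw [Int.emod_eq_emod_iff_emod_sub_eq_zero]
    have : w (Sum.inr i) - v (Sum.inr i) = dv * (-u (Sum.inr i)) := by
      have := hvw (Sum.inr i)
      linarith
    rw [this]
    exact Int.mul_emod_right _ _
  rw [hzs] at Rw
  -- equal norms give B₁ = B₂
  have hnv := Rv.norm_pres hsymm
  have hnw := Rw.norm_pres hsymm
  have hnorm : bf (MM M') v v = bf (MM M') w w := hsq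
  have hBB : B₁ = B₂ := by
    rw [bform] at hnv hnw
    have h3 : dv * B₁ + B₁ * dv = dv * B₂ + B₂ * dv := by
      rw [hnorm] at hnv
      linarith [hnv, hnw]
    have h4 : (2 * dv) * B₁ = (2 * dv) * B₂ := by ring_nf; ring_nf at h3; linarith
    exact mul_left_cancel₀ (by positivity) h4
  rw [hBB] at Rv
  obtain ⟨lv, hlv⟩ := Rv
  obtain ⟨lw, hlw⟩ := Rw
  refine ⟨prodMat (invList lw ++ lv), ?_, ?_, ?_, ?_, ?_⟩
  · exact prodMat_isometry hsymm _
  · exact prodMat_det_one hsymm hnd _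
  · exact prodMat_orient hsymm _
  · intro x hx
    exact disc_triv hsymm _ x hx
  · rw [prodMat_append, ← mulVec_mulVec, hlv, ← hlw, mulVec_mulVec,
      prodMat_inv_left hsymm, one_mulVec]


/-- Eichler's criterion: let `L'` be an even lattice and `L = U² ⊕ L'`. If `v, w ∈ L` are
primitive elements with `(v,v) = (w,w)` and `[v/div(v)] = [w/div(w)]` in the discriminant
group `A_L`, then there is an isometry `g ∈ S̃O⁺(L)` — of determinant `1`, preserving the
orientation of the positive cone, and acting trivially on `A_L` — with `g(v) = w`. -/
theorem stmt_3 (n : ℕ) (M' : Matrix (Fin n) (Fin n) ℤ)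
    (hsymm : M'ᵀ = M') (hnd : M'.det ≠ 0)
    (heven : ∀ v : Fin n → ℤ, ∃ k : ℤ, v ⬝ᵥ (M' *ᵥ v) = 2 * k)
    (v w : (Fin 4 ⊕ Fin n) → ℤ)
    (hvprim : IsPrimitiveVec v) (hwprim : IsPrimitiveVec w)
    -- `(v,v) = (w,w)`:
    (hsq : v ⬝ᵥ ((Matrix.fromBlocks U2G 0 0 M') *ᵥ v) =
      w ⬝ᵥ ((Matrix.fromBlocks U2G 0 0 M') *ᵥ w))
    -- `dv` and `dw` are the divisibilities of `v` and `w`: the positive generators of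
    -- the ideals `(v, L)` and `(w, L)` of `ℤ`:
    (dv dw : ℤ) (hdv : 0 < dv) (hdw : 0 < dw)
    (hdvdvd : ∀ x : (Fin 4 ⊕ Fin n) → ℤ, dv ∣ v ⬝ᵥ ((Matrix.fromBlocks U2G 0 0 M') *ᵥ x))
    (hdvmem : ∃ x : (Fin 4 ⊕ Fin n) → ℤ, v ⬝ᵥ ((Matrix.fromBlocks U2G 0 0 M') *ᵥ x) = dv)
    (hdwdvd : ∀ x : (Fin 4 ⊕ Fin n) → ℤ, dw ∣ w ⬝ᵥ ((Matrix.fromBlocks U2G 0 0 M') *ᵥ x))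
    (hdwmem : ∃ x : (Fin 4 ⊕ Fin n) → ℤ, w ⬝ᵥ ((Matrix.fromBlocks U2G 0 0 M') *ᵥ x) = dw)
    -- `[v/div(v)] = [w/div(w)]` in `A_L`, i.e. `v/dv - w/dw ∈ L`:
    (hclass : ∃ u : (Fin 4 ⊕ Fin n) → ℤ, dw • v - dv • w = (dv * dw) • u) :
    ∃ g : Matrix (Fin 4 ⊕ Fin n) (Fin 4 ⊕ Fin n) ℤ,
      IsIsometry (Matrix.fromBlocks U2G 0 0 M') g ∧
      g.det = 1 ∧
      OrientPres (Matrix.fromBlocks U2G 0 0 M') g ∧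
      -- `g` acts trivially on the discriminant group `A_L = L^∨/L`:
      (∀ x : (Fin 4 ⊕ Fin n) → ℚ,
        (∀ y : (Fin 4 ⊕ Fin n) → ℤ, ∃ k : ℤ,
          bilinQ (Matrix.fromBlocks U2G 0 0 M') x (castVec y) = (k : ℚ)) →
        ∃ z : (Fin 4 ⊕ Fin n) → ℤ,
          (g.map (Int.cast : ℤ → ℚ)) *ᵥ x - x = castVec z) ∧
      g *ᵥ v = w :=
  stmt_3' n M' hsymm hnd heven v w hvprim hwprim hsq dv dw hdv hdw hdvdvd hdvmem hdwdvd hdwmem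
    hclass
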